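/- Let H : ℝ^d → ℝ (or H on the torus Ω = ℝ^d/ℤ^d) be an even C¹ function whose gradient is L-Lipschitz, and define F(p) = (1/(2N²))∑_{i=1}^N∑_{j=1}^N H(p_i − p_j) for p = (p_1,…,p_N). Then the gradient of F is (2L/N)-Lipschitz: for all p⁽¹⁾, p⁽²⁾, ‖∇F(p⁽¹⁾) − ∇F(p⁽²⁾)‖₂ ≤ (2L/N)‖p⁽¹⁾ − p⁽²⁾‖₂, where ∂_k F(p) = (1/N²)∑_{i=1}^N ∇H(p_k − p_i). -/

import Mathlib

open MeasureTheory Filter Topology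
open scoped NNReal RealInnerProductSpace

noncomputable section

/-- Points in `ℝ^d` (Euclidean norm). -/
abbrev Pt (d : ℕ) : Type := EuclideanSpace ℝ (Fin d)

/-- Configurations `p = (p_1, …, p_N)` of `N` points, with the Euclidean norm
`‖p‖₂ = (∑ᵢ ‖pᵢ‖₂²)^{1/2}` on the concatenated vector. -/
abbrev Config (N d : ℕ) : Type := PiLp 2 (fun _ : Fin N => Pt d)

/-- The repulsion potential `F(p) = (1/(2N²)) ∑ᵢ∑ⱼ H(pᵢ − pⱼ)`. -/
def Frep (N d : ℕ) (H : Pt d → ℝ) (p : Config N d) : ℝ :=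
  (1 / (2 * (N : ℝ) ^ 2)) * ∑ i, ∑ j, H (p i - p j)

section Aux

variable {E : Type*} [NormedAddCommGroup E] [InnerProductSpace ℝ E] [CompleteSpace E]

/-- If `f` has Fréchet derivative `D` at `x` and `D v = ⟪g, v⟫` for all `v`, then `g` is the
gradient of `f` at `x`. -/
lemma hasGradientAt_of_fderiv {f : E → ℝ} {D : E →L[ℝ] ℝ} {g x : E}
    (hD : HasFDerivAt f D x) (h : ∀ v, D v = ⟪g, v⟫) : HasGradientAt f g x := by
  have hDg : D = InnerProductSpace.toDual ℝ E g :=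
    ContinuousLinearMap.ext fun v => by rw [h, InnerProductSpace.toDual_apply_apply]
  exact hasGradientAt_iff_hasFDerivAt.2 (hDg ▸ hD)

/-- The gradient of an even `C¹` function is odd. -/
lemma gradient_neg_of_even {H : E → ℝ} (hEven : ∀ x, H (-x) = H x)
    (hdiff : ContDiff ℝ 1 H) (x : E) : gradient H (-x) = - gradient H x := by
  have hdAt : ∀ y, DifferentiableAt ℝ H y := fun y => (hdiff.differentiable one_ne_zero) y
  have h1 : HasGradientAt H (gradient H (-x)) (-x) := (hdAt (-x)).hasGradientAt
  have hneg : HasFDerivAt (fun y : E => -y) (-(ContinuousLinearMap.id ℝ E)) x :=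
    (hasFDerivAt_id x).neg
  have hcomp : HasFDerivAt (fun y : E => H (-y))
      ((InnerProductSpace.toDual ℝ E (gradient H (-x))).comp
        (-(ContinuousLinearMap.id ℝ E))) x :=
    (h1.hasFDerivAt).comp x hneg
  have heq : (fun y : E => H (-y)) = H := funext hEven
  rw [heq] at hcomp
  have h2 : HasGradientAt H (-(gradient H (-x))) x := by
    apply hasGradientAt_of_fderiv hcomp
    intro v
    simp [inner_neg_left, inner_neg_right]
  rw [h2.gradient, neg_neg]

/-- Componentwise norm bounds give a norm bound in `PiLp 2`. -/
lemma pilp_norm_le_norm {ι : Type*} [Fintype ι] {E : ι → Type*} [∀ i, NormedAddCommGroup (E i)]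
    (u : PiLp 2 E) (w : EuclideanSpace ℝ ι) (h : ∀ k, ‖u k‖ ≤ w k) : ‖u‖ ≤ ‖w‖ := by
  rw [PiLp.norm_eq_of_L2, EuclideanSpace.norm_eq]
  apply Real.sqrt_le_sqrt
  apply Finset.sum_le_sum
  intro k _
  have := pow_le_pow_left₀ (norm_nonneg (u k)) (h k) 2
  calc ‖u k‖ ^ 2 ≤ (w k) ^ 2 := this
    _ = ‖w k‖ ^ 2 := by rw [Real.norm_eq_abs, sq_abs]

end Aux

lemma hasGradientAt_Frep {d N : ℕ} (hN : 0 < N) {H : Pt d → ℝ}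
    (hEven : ∀ x, H (-x) = H x) (hdiff : ContDiff ℝ 1 H) (p : Config N d) :
    HasGradientAt (Frep N d H)
      (show Config N d from WithLp.toLp 2 fun k => ((N : ℝ) ^ 2)⁻¹ • ∑ i, gradient H (p k - p i)) p := by
  have hdAt : ∀ y, DifferentiableAt ℝ H y := fun y => (hdiff.differentiable one_ne_zero) y
  set g := gradient H with hg
  have hterm : ∀ i j : Fin N, HasFDerivAt (fun q : Config N d => H (q i - q j))
      ((InnerProductSpace.toDual ℝ (Pt d) (g (p i - p j))).comp
        (PiLp.proj (𝕜 := ℝ) 2 (fun _ : Fin N => Pt d) i - PiLp.proj (𝕜 := ℝ) 2 (fun _ : Fin N => Pt d) j)) p := by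
    intro i j
    have h1 : HasFDerivAt (fun q : Config N d => q i - q j)
        (PiLp.proj (𝕜 := ℝ) 2 (fun _ : Fin N => Pt d) i - PiLp.proj (𝕜 := ℝ) 2 (fun _ : Fin N => Pt d) j) p :=
      ((PiLp.proj (𝕜 := ℝ) 2 (fun _ : Fin N => Pt d) i).hasFDerivAt).sub
        ((PiLp.proj (𝕜 := ℝ) 2 (fun _ : Fin N => Pt d) j).hasFDerivAt)
    have h2 : HasFDerivAt H (InnerProductSpace.toDual ℝ (Pt d) (g (p i - p j))) (p i - p j) :=
      ((hdAt (p i - p j)).hasGradientAt).hasFDerivAt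
    exact h2.comp p h1
  have hsum : HasFDerivAt (fun q : Config N d => ∑ i, ∑ j, H (q i - q j))
      (∑ i, ∑ j, (InnerProductSpace.toDual ℝ (Pt d) (g (p i - p j))).comp
        (PiLp.proj (𝕜 := ℝ) 2 (fun _ : Fin N => Pt d) i - PiLp.proj (𝕜 := ℝ) 2 (fun _ : Fin N => Pt d) j)) p :=
    HasFDerivAt.fun_sum fun i _ => HasFDerivAt.fun_sum fun j _ => hterm i j
  have hF : HasFDerivAt (Frep N d H)
      ((1 / (2 * (N : ℝ) ^ 2)) • ∑ i, ∑ j,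
        (InnerProductSpace.toDual ℝ (Pt d) (g (p i - p j))).comp
          (PiLp.proj (𝕜 := ℝ) 2 (fun _ : Fin N => Pt d) i - PiLp.proj (𝕜 := ℝ) 2 (fun _ : Fin N => Pt d) j)) p := by
    unfold Frep
    exact hsum.const_mul _
  apply hasGradientAt_of_fderiv hF
  intro v
  have hNR : (N : ℝ) ≠ 0 := Nat.cast_ne_zero.2 hN.ne'
  have hodd : ∀ i j : Fin N, g (p i - p j) = - g (p j - p i) := by
    intro i j
    rw [hg, show p i - p j = -(p j - p i) by abel, gradient_neg_of_even hEven hdiff]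
  have hswap : ∑ i, ∑ j, ⟪g (p i - p j), v j⟫ = - ∑ i, ∑ j, ⟪g (p i - p j), v i⟫ := by
    rw [Finset.sum_comm]
    rw [← Finset.sum_neg_distrib]
    apply Finset.sum_congr rfl
    intro j _
    rw [← Finset.sum_neg_distrib]
    apply Finset.sum_congr rfl
    intro i _
    rw [hodd i j, inner_neg_left]
  conv_rhs => rw [PiLp.inner_apply]
  simp only [ContinuousLinearMap.smul_apply, ContinuousLinearMap.sum_apply,
    ContinuousLinearMap.comp_apply, ContinuousLinearMap.sub_apply, PiLp.proj_apply,
    InnerProductSpace.toDual_apply_apply, smul_eq_mul, real_inner_smul_left, sum_inner,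
    inner_sub_right, Finset.sum_sub_distrib]
  rw [hswap, sub_neg_eq_add, ← Finset.mul_sum]
  field_simp
  ring

/-- If `H` is even, `C¹`, and `∇H` is `L`-Lipschitz, then
`∂ₖF(p) = (1/N²) ∑ᵢ ∇H(p_k − p_i)` and `∇F` is `(2L/N)`-Lipschitz. -/
theorem gradient_Frep_lipschitz {d N : ℕ} (hN : 0 < N) (L : ℝ≥0) (H : Pt d → ℝ)
    (hEven : ∀ x, H (-x) = H x) (hdiff : ContDiff ℝ 1 H)
    (hLip : LipschitzWith L (gradient H)) :
    (∀ p : Config N d, ∀ k : Fin N,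
        gradient (Frep N d H) p k = ((N : ℝ) ^ 2)⁻¹ • ∑ i, gradient H (p k - p i)) ∧
      LipschitzWith (2 * L / N) (gradient (Frep N d H)) := by
  have hgrad : ∀ p : Config N d, gradient (Frep N d H) p
      = (show Config N d from WithLp.toLp 2 fun k => ((N : ℝ) ^ 2)⁻¹ • ∑ i, gradient H (p k - p i)) :=
    fun p => (hasGradientAt_Frep hN hEven hdiff p).gradient
  refine ⟨fun p k => by rw [hgrad p], ?_⟩
  apply LipschitzWith.of_dist_le_mul
  intro p q
  rw [dist_eq_norm, dist_eq_norm, hgrad p, hgrad q]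
  set g := gradient H with hg
  have hNr : (0 : ℝ) < N := Nat.cast_pos.2 hN
  set c : ℝ := ((N : ℝ) ^ 2)⁻¹ with hcdef
  have hc : 0 ≤ c := by positivity
  set a : EuclideanSpace ℝ (Fin N) := WithLp.toLp 2 (fun k => ‖p k - q k‖ : Fin N → ℝ) with ha
  set S : ℝ := ∑ i, ‖p i - q i‖ with hS
  have hSnn : 0 ≤ S := Finset.sum_nonneg fun i _ => norm_nonneg _
  set ones : EuclideanSpace ℝ (Fin N) := WithLp.toLp 2 (fun _ => 1 : Fin N → ℝ) with hones
  -- ‖a‖ = ‖p - q‖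
  have hanorm : ‖a‖ = ‖p - q‖ := by
    rw [EuclideanSpace.norm_eq, PiLp.norm_eq_of_L2]
    congr 1
    apply Finset.sum_congr rfl
    intro k _
    simp [ha, Real.norm_eq_abs, abs_norm]
  have honesnorm : ‖ones‖ = Real.sqrt N := by
    rw [EuclideanSpace.norm_eq]
    simp [hones]
  -- Cauchy–Schwarz : S ≤ √N ⬝ ‖p - q‖
  have hSle : S ≤ Real.sqrt N * ‖p - q‖ := by
    have h1 : ⟪ones, a⟫ ≤ ‖ones‖ * ‖a‖ := real_inner_le_norm ones a
    have h2 : ⟪ones, a⟫ = S := by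
      rw [PiLp.inner_apply]
      simp [hones, ha, RCLike.inner_apply, hS]
    rw [h2, honesnorm, hanorm] at h1
    exact h1
  -- componentwise bound
  have hLip' : ∀ x y : Pt d, ‖g x - g y‖ ≤ (L : ℝ) * ‖x - y‖ := by
    intro x y
    have := hLip.dist_le_mul x y
    rwa [dist_eq_norm, dist_eq_norm] at this
  have hcomp : ∀ k : Fin N,
      ‖((show Config N d from WithLp.toLp 2 fun k => c • ∑ i, g (p k - p i))
        - (show Config N d from WithLp.toLp 2 fun k => c • ∑ i, g (q k - q i))) k‖
        ≤ c * ((L : ℝ) * ((N : ℝ) * a k + S)) := by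
    intro k
    have hsub : ((show Config N d from WithLp.toLp 2 fun k => c • ∑ i, g (p k - p i))
        - (show Config N d from WithLp.toLp 2 fun k => c • ∑ i, g (q k - q i))) k
        = c • ∑ i, (g (p k - p i) - g (q k - q i)) := by
      simp [PiLp.sub_apply, smul_sub, Finset.sum_sub_distrib]
    rw [hsub, norm_smul, Real.norm_eq_abs, abs_of_nonneg hc]
    apply mul_le_mul_of_nonneg_left _ hc
    calc ‖∑ i, (g (p k - p i) - g (q k - q i))‖
        ≤ ∑ i, ‖g (p k - p i) - g (q k - q i)‖ := norm_sum_le _ _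
      _ ≤ ∑ i, (L : ℝ) * (a k + a i) := by
          apply Finset.sum_le_sum
          intro i _
          refine le_trans (hLip' _ _) (mul_le_mul_of_nonneg_left ?_ L.coe_nonneg)
          have : p k - p i - (q k - q i) = (p k - q k) - (p i - q i) := by abel
          rw [this]
          exact le_trans (norm_sub_le _ _) le_rfl
      _ = (L : ℝ) * ((N : ℝ) * a k + S) := by
          rw [← Finset.mul_sum]
          congr 1
          rw [Finset.sum_add_distrib, Finset.sum_const, Finset.card_univ, Fintype.card_fin,
            nsmul_eq_mul]
  -- assemble
  set w : EuclideanSpace ℝ (Fin N) :=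
    WithLp.toLp 2 (fun k => c * ((L : ℝ) * ((N : ℝ) * a k + S)) : Fin N → ℝ) with hw
  have hnorm_le : ‖(show Config N d from WithLp.toLp 2 fun k => c • ∑ i, g (p k - p i))
      - (show Config N d from WithLp.toLp 2 fun k => c • ∑ i, g (q k - q i))‖ ≤ ‖w‖ :=
    pilp_norm_le_norm _ w hcomp
  have hwdecomp : w = (c * (L : ℝ) * (N : ℝ)) • a + (c * (L : ℝ) * S) • ones := by
    refine PiLp.ext fun k => ?_
    show c * ((L : ℝ) * ((N : ℝ) * a k + S)) = ((c * (L : ℝ) * (N : ℝ)) • a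
      + (c * (L : ℝ) * S) • ones) k
    simp only [PiLp.add_apply, PiLp.smul_apply, smul_eq_mul, hones]
    show c * ((L : ℝ) * ((N : ℝ) * a k + S))
      = c * (L : ℝ) * (N : ℝ) * a k + c * (L : ℝ) * S * 1
    ring
  have hwnorm : ‖w‖ ≤ c * (L : ℝ) * (N : ℝ) * ‖a‖ + c * (L : ℝ) * S * ‖ones‖ := by
    rw [hwdecomp]
    refine le_trans (norm_add_le _ _) ?_
    rw [norm_smul, norm_smul, Real.norm_eq_abs, Real.norm_eq_abs]
    have h1 : |c * (L : ℝ) * (N : ℝ)| = c * (L : ℝ) * (N : ℝ) := by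
      rw [abs_of_nonneg]; positivity
    have h2 : |c * (L : ℝ) * S| = c * (L : ℝ) * S := by
      rw [abs_of_nonneg]; positivity
    rw [h1, h2]
  have hfinal : c * (L : ℝ) * (N : ℝ) * ‖a‖ + c * (L : ℝ) * S * ‖ones‖
      ≤ 2 * (L : ℝ) / (N : ℝ) * ‖p - q‖ := by
    rw [hanorm, honesnorm]
    have hstep : c * (L : ℝ) * S * Real.sqrt N
        ≤ c * (L : ℝ) * (Real.sqrt N * ‖p - q‖) * Real.sqrt N := by
      apply mul_le_mul_of_nonneg_right _ (Real.sqrt_nonneg _)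
      apply mul_le_mul_of_nonneg_left hSle
      positivity
    refine le_trans (add_le_add_right hstep _) ?_
    have hsq : Real.sqrt N * Real.sqrt N = (N : ℝ) := Real.mul_self_sqrt hNr.le
    have hcN : c * (N : ℝ) = ((N : ℝ))⁻¹ := by
      rw [hcdef]; field_simp
    have h3 : c * (L : ℝ) * (Real.sqrt N * ‖p - q‖) * Real.sqrt N
        = c * (L : ℝ) * (Real.sqrt N * Real.sqrt N) * ‖p - q‖ := by ring
    rw [h3, hsq]
    have : c * (L : ℝ) * (N : ℝ) * ‖p - q‖ + c * (L : ℝ) * (N : ℝ) * ‖p - q‖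
        = 2 * (c * (N : ℝ)) * (L : ℝ) * ‖p - q‖ := by ring
    rw [this, hcN]
    have : (2 : ℝ) * ((N : ℝ))⁻¹ * (L : ℝ) * ‖p - q‖ = 2 * (L : ℝ) / (N : ℝ) * ‖p - q‖ := by
      ring
    rw [this]
  have hcoe : ((2 * L / N : ℝ≥0) : ℝ) = 2 * (L : ℝ) / (N : ℝ) := by
    push_cast
    ring
  rw [hcoe]
  exact le_trans hnorm_le (le_trans hwnorm hfinal)
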